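/- Let p > 1. There exists a constant C > 0 (one may take C = p/(p−1)) such that for every positive continuously differentiable function f on the interval (0,1) with lim_{x→0+} f(x) = 0, one has ‖x ↦ f(x)/x‖_{L^p(0,1)} ≤ C ‖f'‖_{L^p(0,1)}. -/

import Mathlib

open MeasureTheory Real Set

-- integral of t^(-(1/p)) on (0,x)
lemma hardyAux1 {p x : ℝ} (hp : 1 < p) (hx : 0 < x) :
    ∫⁻ t in Ioo (0:ℝ) x, ENNReal.ofReal (t ^ (-(1/p)))
      = ENNReal.ofReal (p/(p-1) * x ^ ((p-1)/p)) := by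
  have hp0 : 0 < p := lt_trans one_pos hp
  have hr : (-1 : ℝ) < -(1/p) := by
    rw [neg_lt_neg_iff]
    rw [div_lt_one hp0]; exact hp
  have hint : IntervalIntegrable (fun t : ℝ => t ^ (-(1/p))) volume 0 x :=
    intervalIntegral.intervalIntegrable_rpow' hr
  have hIoc : IntegrableOn (fun t : ℝ => t ^ (-(1/p))) (Ioc 0 x) volume :=
    (intervalIntegrable_iff_integrableOn_Ioc_of_le hx.le).mp hint
  have hIoo : IntegrableOn (fun t : ℝ => t ^ (-(1/p))) (Ioo 0 x) volume :=
    hIoc.mono_set Ioo_subset_Ioc_self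
  have hnn : 0 ≤ᵐ[volume.restrict (Ioo (0:ℝ) x)] fun t : ℝ => t ^ (-(1/p)) := by
    filter_upwards [self_mem_ae_restrict (measurableSet_Ioo : MeasurableSet (Ioo (0:ℝ) x))]
      with t ht
    exact Real.rpow_nonneg ht.1.le _
  rw [← MeasureTheory.ofReal_integral_eq_lintegral_ofReal hIoo hnn]
  congr 1
  have h1 : ∫ t in Ioo (0:ℝ) x, t ^ (-(1/p)) = ∫ t in (0:ℝ)..x, t ^ (-(1/p)) := by
    rw [intervalIntegral.integral_of_le hx.le, integral_Ioc_eq_integral_Ioo]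
  rw [h1, integral_rpow (Or.inl hr)]
  have hp1 : 0 < p - 1 := by linarith
  have he : -(1/p) + 1 = (p-1)/p := by field_simp; ring
  rw [he, Real.zero_rpow (by positivity : (p-1)/p ≠ 0), sub_zero]
  rw [div_div_eq_mul_div]
  field_simp
lemma hardyAux2 {p t : ℝ} (hp : 1 < p) (ht : 0 < t) (ht1 : t < 1) :
    ∫⁻ x in Ioo t 1, ENNReal.ofReal (x ^ ((1-2*p)/p))
      ≤ ENNReal.ofReal (p/(p-1) * t ^ (-((p-1)/p))) := by
  have hp0 : 0 < p := lt_trans one_pos hp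
  have hp1 : 0 < p - 1 := by linarith
  set r : ℝ := (1-2*p)/p with hr
  have hcont : ContinuousOn (fun x : ℝ => x ^ r) (Icc t 1) := by
    intro x hx
    exact (Real.continuousAt_rpow_const x r (Or.inl (by linarith [hx.1]))).continuousWithinAt
  have hIoo : IntegrableOn (fun x : ℝ => x ^ r) (Ioo t 1) volume :=
    (hcont.integrableOn_Icc).mono_set Ioo_subset_Icc_self
  have hnn : 0 ≤ᵐ[volume.restrict (Ioo t 1)] fun x : ℝ => x ^ r := by
    filter_upwards [self_mem_ae_restrict (measurableSet_Ioo : MeasurableSet (Ioo t 1))] with x hx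
    exact Real.rpow_nonneg (le_trans ht.le hx.1.le) _
  rw [← MeasureTheory.ofReal_integral_eq_lintegral_ofReal hIoo hnn]
  apply ENNReal.ofReal_le_ofReal
  have h1 : ∫ x in Ioo t 1, x ^ r = ∫ x in t..(1:ℝ), x ^ r := by
    rw [intervalIntegral.integral_of_le ht1.le, integral_Ioc_eq_integral_Ioo]
  have h0 : (0:ℝ) ∉ uIcc t 1 := by
    rw [uIcc_of_le ht1.le]
    exact fun h => absurd h.1 (not_le.mpr ht)
  have hrne : r ≠ -1 := by
    rw [hr]
    intro h
    have : 1 - 2*p = -p := by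
      field_simp at h; linarith
    linarith
  rw [h1, integral_rpow (Or.inr ⟨hrne, h0⟩)]
  have he : r + 1 = -((p-1)/p) := by rw [hr]; field_simp; ring
  rw [he, Real.one_rpow]
  have hs : 0 < t ^ (-((p-1)/p)) := Real.rpow_pos_of_pos ht _
  generalize t ^ (-((p-1)/p)) = s at hs ⊢
  have hd : -((p-1)/p) ≠ 0 := by
    simp only [ne_eq, neg_eq_zero, div_eq_zero_iff]
    push_neg
    constructor <;> intro h <;> [linarith; linarith]
  have heq : (1 - s) / (-((p-1)/p)) = (s - 1) * (p/(p-1)) := by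
    rw [div_eq_iff hd]
    field_simp
    ring
  rw [heq]
  have hq : 0 < p/(p-1) := div_pos hp0 hp1
  nlinarith [hs, hq]
lemma hardyHolder {p : ℝ} (hp : 1 < p) (g : ℝ → ENNReal) (hg : Measurable g)
    {x : ℝ} (hx : 0 < x) :
    (∫⁻ t in Ioo (0:ℝ) x, g t) ^ p ≤
      (∫⁻ t in Ioo (0:ℝ) x, g t ^ p * ENNReal.ofReal (t ^ ((p-1)/p))) *
        ENNReal.ofReal (p/(p-1) * x ^ ((p-1)/p)) ^ (p - 1) := by
  have hp0 : 0 < p := lt_trans one_pos hp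
  have hp1 : 0 < p - 1 := by linarith
  set q : ℝ := p / (p-1) with hq
  have hpq : p.HolderConjugate q := Real.HolderConjugate.conjExponent hp
  set b : ℝ := (p-1)/(p*p) with hb
  have hbp : b * p = (p-1)/p := by rw [hb]; field_simp
  have hbq : (-b) * q = -(1/p) := by rw [hb, hq]; field_simp
  -- decompose g t = (g t * ofReal (t^b)) * ofReal (t^(-b)) a.e. on Ioo 0 x
  have hsplit : ∫⁻ t in Ioo (0:ℝ) x, g t
      = ∫⁻ t in Ioo (0:ℝ) x,
          ((fun t => g t * ENNReal.ofReal (t ^ b)) * fun t => ENNReal.ofReal (t ^ (-b))) t := by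
    apply lintegral_congr_ae
    filter_upwards [self_mem_ae_restrict (measurableSet_Ioo : MeasurableSet (Ioo (0:ℝ) x))]
      with t ht
    simp only [Pi.mul_apply]
    rw [mul_assoc, ← ENNReal.ofReal_mul (Real.rpow_nonneg ht.1.le _),
      ← Real.rpow_add ht.1, add_neg_cancel, Real.rpow_zero, ENNReal.ofReal_one, mul_one]
  have hmeas1 : AEMeasurable (fun t => g t * ENNReal.ofReal (t ^ b))
      (volume.restrict (Ioo (0:ℝ) x)) :=
    (hg.mul ((measurable_id.pow_const b).ennreal_ofReal)).aemeasurable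
  have hmeas2 : AEMeasurable (fun t : ℝ => ENNReal.ofReal (t ^ (-b)))
      (volume.restrict (Ioo (0:ℝ) x)) :=
    ((measurable_id.pow_const (-b)).ennreal_ofReal).aemeasurable
  have hhold := ENNReal.lintegral_mul_le_Lp_mul_Lq (volume.restrict (Ioo (0:ℝ) x)) hpq
    hmeas1 hmeas2
  rw [← hsplit] at hhold
  -- identify the two factors
  have hfac1 : ∀ᵐ t ∂(volume.restrict (Ioo (0:ℝ) x)),
      (g t * ENNReal.ofReal (t ^ b)) ^ p = g t ^ p * ENNReal.ofReal (t ^ ((p-1)/p)) := by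
    filter_upwards [self_mem_ae_restrict (measurableSet_Ioo : MeasurableSet (Ioo (0:ℝ) x))]
      with t ht
    rw [ENNReal.mul_rpow_of_nonneg _ _ hp0.le, ENNReal.ofReal_rpow_of_pos
      (Real.rpow_pos_of_pos ht.1 _), ← Real.rpow_mul ht.1.le, hbp]
  have hfac2 : ∀ᵐ t ∂(volume.restrict (Ioo (0:ℝ) x)),
      ENNReal.ofReal (t ^ (-b)) ^ q = ENNReal.ofReal (t ^ (-(1/p))) := by
    filter_upwards [self_mem_ae_restrict (measurableSet_Ioo : MeasurableSet (Ioo (0:ℝ) x))]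
      with t ht
    rw [ENNReal.ofReal_rpow_of_pos (Real.rpow_pos_of_pos ht.1 _), ← Real.rpow_mul ht.1.le, hbq]
  rw [lintegral_congr_ae hfac1, lintegral_congr_ae hfac2] at hhold
  rw [hardyAux1 hp hx] at hhold
  -- raise to the p-th power
  have := ENNReal.rpow_le_rpow hhold hp0.le
  rw [ENNReal.mul_rpow_of_nonneg _ _ hp0.le, ← ENNReal.rpow_mul, ← ENNReal.rpow_mul,
    one_div_mul_cancel hp0.ne', ENNReal.rpow_one] at this
  have hqp : 1 / q * p = p - 1 := by
    rw [hq]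
    field_simp
  rw [hqp] at this
  exact this
lemma hardyKey {p : ℝ} (hp : 1 < p) (g : ℝ → ENNReal) (hg : Measurable g) :
    ∫⁻ x in Ioo (0:ℝ) 1, (∫⁻ t in Ioo (0:ℝ) x, g t) ^ p * ENNReal.ofReal (x ^ (-p))
      ≤ ENNReal.ofReal (p/(p-1)) ^ p * ∫⁻ t in Ioo (0:ℝ) 1, g t ^ p := by
  have hp0 : 0 < p := lt_trans one_pos hp
  have hp1 : 0 < p - 1 := by linarith
  set q : ℝ := p / (p-1) with hq
  have hq0 : 0 < q := div_pos hp0 hp1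
  set r : ℝ := (1-2*p)/p with hr
  set e : ℝ := (p-1)/p with he
  set h : ℝ → ENNReal := fun t => g t ^ p * ENNReal.ofReal (t ^ e) with hh
  have hhmeas : Measurable h :=
    (hg.pow_const p).mul ((measurable_id.pow_const e).ennreal_ofReal)
  -- pointwise bound
  have step1 : ∀ x ∈ Ioo (0:ℝ) 1,
      (∫⁻ t in Ioo (0:ℝ) x, g t) ^ p * ENNReal.ofReal (x ^ (-p))
        ≤ ENNReal.ofReal (q ^ (p-1)) *
            (ENNReal.ofReal (x ^ r) * ∫⁻ t in Ioo (0:ℝ) x, h t) := by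
    intro x hx
    have h1 := hardyHolder hp g hg hx.1
    have h2 : ENNReal.ofReal (q * x ^ e) ^ (p - 1) * ENNReal.ofReal (x ^ (-p))
        = ENNReal.ofReal (q ^ (p-1)) * ENNReal.ofReal (x ^ r) := by
      rw [ENNReal.ofReal_rpow_of_pos (mul_pos hq0 (Real.rpow_pos_of_pos hx.1 e)), Real.mul_rpow hq0.le
        (Real.rpow_nonneg hx.1.le _), ← Real.rpow_mul hx.1.le,
        ← ENNReal.ofReal_mul (mul_nonneg (Real.rpow_nonneg hq0.le _) (Real.rpow_nonneg hx.1.le _)),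
        mul_assoc, ← Real.rpow_add hx.1, ENNReal.ofReal_mul (Real.rpow_nonneg hq0.le _)]
      congr 2
      rw [he, hr]
      field_simp
      ring
    calc (∫⁻ t in Ioo (0:ℝ) x, g t) ^ p * ENNReal.ofReal (x ^ (-p))
        ≤ ((∫⁻ t in Ioo (0:ℝ) x, h t) * ENNReal.ofReal (q * x ^ e) ^ (p - 1)) *
            ENNReal.ofReal (x ^ (-p)) := by
          exact mul_le_mul_left h1 _
      _ = (∫⁻ t in Ioo (0:ℝ) x, h t) *
            (ENNReal.ofReal (q * x ^ e) ^ (p - 1) * ENNReal.ofReal (x ^ (-p))) := by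
          rw [mul_assoc]
      _ = ENNReal.ofReal (q ^ (p-1)) *
            (ENNReal.ofReal (x ^ r) * ∫⁻ t in Ioo (0:ℝ) x, h t) := by
          rw [h2]; ring
  -- Tonelli setup
  set F : ℝ → ℝ → ENNReal :=
    fun x t => (Ioo (0:ℝ) x).indicator (fun t => h t * ENNReal.ofReal (x ^ r)) t with hF
  have hFmeas : Measurable (Function.uncurry F) := by
    have hSet : MeasurableSet {z : ℝ × ℝ | 0 < z.2 ∧ z.2 < z.1} :=
      (measurableSet_lt measurable_const measurable_snd).inter
        (measurableSet_lt measurable_snd measurable_fst)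
    have : Function.uncurry F = Set.indicator {z : ℝ × ℝ | 0 < z.2 ∧ z.2 < z.1}
        (fun z => h z.2 * ENNReal.ofReal (z.1 ^ r)) := by
      ext z
      simp only [Function.uncurry, hF, Set.indicator_apply, mem_Ioo, mem_setOf_eq]
    rw [this]
    exact Measurable.indicator
      ((hhmeas.comp measurable_snd).mul ((measurable_fst.pow_const r).ennreal_ofReal)) hSet
  -- inner identification for x
  have eqx : ∀ x ∈ Ioo (0:ℝ) 1,
      ∫⁻ t in Ioo (0:ℝ) 1, F x t
        = ENNReal.ofReal (x ^ r) * ∫⁻ t in Ioo (0:ℝ) x, h t := by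
    intro x hx
    rw [hF]
    rw [lintegral_indicator measurableSet_Ioo]
    rw [Measure.restrict_restrict measurableSet_Ioo,
      inter_eq_self_of_subset_left (Ioo_subset_Ioo_right hx.2.le)]
    rw [lintegral_mul_const' _ _ ENNReal.ofReal_ne_top, mul_comm]
  -- inner identification for t
  have eqt : ∀ t ∈ Ioo (0:ℝ) 1,
      ∫⁻ x in Ioo (0:ℝ) 1, F x t
        = h t * ∫⁻ x in Ioo t 1, ENNReal.ofReal (x ^ r) := by
    intro t ht
    have hFt : (fun x => F x t)
        = (Ioi t).indicator (fun x => h t * ENNReal.ofReal (x ^ r)) := by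
      ext x
      simp only [hF, Set.indicator_apply, mem_Ioo, mem_Ioi, ht.1, true_and]
    rw [hFt, lintegral_indicator measurableSet_Ioi,
      Measure.restrict_restrict measurableSet_Ioi]
    have : Ioi t ∩ Ioo (0:ℝ) 1 = Ioo t 1 := by
      ext x
      simp only [mem_inter_iff, mem_Ioi, mem_Ioo]
      constructor
      · rintro ⟨h1, _, h3⟩; exact ⟨h1, h3⟩
      · rintro ⟨h1, h2⟩; exact ⟨h1, lt_trans ht.1 h1, h2⟩
    rw [this, lintegral_const_mul _ ((measurable_id'.pow_const r).ennreal_ofReal)]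
  -- bound after swap, for t
  have step2 : ∀ t ∈ Ioo (0:ℝ) 1,
      h t * ∫⁻ x in Ioo t 1, ENNReal.ofReal (x ^ r)
        ≤ ENNReal.ofReal q * g t ^ p := by
    intro t ht
    have hb := hardyAux2 hp ht.1 ht.2
    calc h t * ∫⁻ x in Ioo t 1, ENNReal.ofReal (x ^ r)
        ≤ h t * ENNReal.ofReal (q * t ^ (-e)) := mul_le_mul_right hb _
      _ = ENNReal.ofReal q * g t ^ p := by
          rw [hh]
          simp only
          rw [ENNReal.ofReal_mul hq0.le, mul_assoc, mul_comm (ENNReal.ofReal (t ^ e)),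
            mul_assoc, ← ENNReal.ofReal_mul (Real.rpow_nonneg ht.1.le _),
            ← Real.rpow_add ht.1, neg_add_cancel, Real.rpow_zero, ENNReal.ofReal_one,
            mul_one, mul_comm]
  -- put it together
  calc ∫⁻ x in Ioo (0:ℝ) 1, (∫⁻ t in Ioo (0:ℝ) x, g t) ^ p * ENNReal.ofReal (x ^ (-p))
      ≤ ∫⁻ x in Ioo (0:ℝ) 1, ENNReal.ofReal (q ^ (p-1)) *
          (ENNReal.ofReal (x ^ r) * ∫⁻ t in Ioo (0:ℝ) x, h t) := by
        apply lintegral_mono_ae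
        filter_upwards [self_mem_ae_restrict (measurableSet_Ioo : MeasurableSet (Ioo (0:ℝ) 1))]
          with x hx
        exact step1 x hx
    _ = ENNReal.ofReal (q ^ (p-1)) *
          ∫⁻ x in Ioo (0:ℝ) 1, ENNReal.ofReal (x ^ r) * ∫⁻ t in Ioo (0:ℝ) x, h t :=
        lintegral_const_mul' _ _ ENNReal.ofReal_ne_top
    _ = ENNReal.ofReal (q ^ (p-1)) *
          ∫⁻ x in Ioo (0:ℝ) 1, ∫⁻ t in Ioo (0:ℝ) 1, F x t := by
        congr 1
        apply lintegral_congr_ae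
        filter_upwards [self_mem_ae_restrict (measurableSet_Ioo : MeasurableSet (Ioo (0:ℝ) 1))]
          with x hx
        exact (eqx x hx).symm
    _ = ENNReal.ofReal (q ^ (p-1)) *
          ∫⁻ t in Ioo (0:ℝ) 1, ∫⁻ x in Ioo (0:ℝ) 1, F x t := by
        congr 1
        exact lintegral_lintegral_swap hFmeas.aemeasurable
    _ ≤ ENNReal.ofReal (q ^ (p-1)) *
          ∫⁻ t in Ioo (0:ℝ) 1, ENNReal.ofReal q * g t ^ p := by
        apply mul_le_mul_right
        apply lintegral_mono_ae
        filter_upwards [self_mem_ae_restrict (measurableSet_Ioo : MeasurableSet (Ioo (0:ℝ) 1))]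
          with t ht
        rw [eqt t ht]
        exact step2 t ht
    _ = ENNReal.ofReal (q ^ (p-1)) * (ENNReal.ofReal q * ∫⁻ t in Ioo (0:ℝ) 1, g t ^ p) := by
        rw [lintegral_const_mul' _ _ ENNReal.ofReal_ne_top]
    _ = ENNReal.ofReal q ^ p * ∫⁻ t in Ioo (0:ℝ) 1, g t ^ p := by
        rw [← mul_assoc]
        congr 1
        rw [ENNReal.ofReal_rpow_of_pos hq0]
        rw [← ENNReal.ofReal_mul (by positivity), ← Real.rpow_add_one hq0.ne']
        congr 1
        ring
/-- **Hardy's inequality.** Let `p > 1`. There exists a constant `C > 0` (one may take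
`C = p/(p-1)`) such that for every positive continuously differentiable function `f`
on `(0,1)` with `f(x) → 0` as `x → 0⁺`, one has
`‖x ↦ f(x)/x‖_{L^p(0,1)} ≤ C ‖f'‖_{L^p(0,1)}`. -/
theorem hardy_inequality (p : ℝ) (hp : 1 < p) :
    ∃ C : ℝ, 0 < C ∧ C = p / (p - 1) ∧
      ∀ f : ℝ → ℝ,
        (∀ x ∈ Ioo (0:ℝ) 1, 0 < f x) →
        ContDiffOn ℝ 1 f (Ioo (0:ℝ) 1) →
        Filter.Tendsto f (nhdsWithin 0 (Ioi (0:ℝ))) (nhds 0) →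
        eLpNorm (fun x => f x / x) (ENNReal.ofReal p) (volume.restrict (Ioo (0:ℝ) 1))
          ≤ ENNReal.ofReal C *
            eLpNorm (fun x => deriv f x) (ENNReal.ofReal p) (volume.restrict (Ioo (0:ℝ) 1)) := by
  have hp0 : 0 < p := lt_trans one_pos hp
  have hp1 : 0 < p - 1 := by linarith
  refine ⟨p / (p-1), div_pos hp0 hp1, rfl, ?_⟩
  intro f hfpos hreg hlim
  set q : ℝ := p / (p-1) with hq
  have hq0 : 0 < q := div_pos hp0 hp1
  set g : ℝ → ENNReal := fun t => (‖deriv f t‖₊ : ENNReal) with hgdef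
  have hgmeas : Measurable g := (measurable_deriv f).nnnorm.coe_nnreal_ennreal
  -- Step A : FTC bound
  have hA : ∀ x ∈ Ioo (0:ℝ) 1, ENNReal.ofReal (f x) ≤ ∫⁻ t in Ioo (0:ℝ) x, g t := by
    intro x hx
    have hbound : ∀ ε ∈ Ioo (0:ℝ) x,
        ENNReal.ofReal (f x - f ε) ≤ ∫⁻ t in Ioo (0:ℝ) x, g t := by
      intro ε hε
      have hsub : uIcc ε x ⊆ Ioo (0:ℝ) 1 := by
        rw [uIcc_of_le hε.2.le]
        intro t ht
        exact ⟨lt_of_lt_of_le hε.1 ht.1, lt_of_le_of_lt ht.2 hx.2⟩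
      have hderivAt : ∀ t ∈ uIcc ε x, HasDerivAt f (deriv f t) t := by
        intro t ht
        exact ((hreg.differentiableOn one_ne_zero).differentiableAt
          (isOpen_Ioo.mem_nhds (hsub ht))).hasDerivAt
      have hcont : ContinuousOn (deriv f) (uIcc ε x) :=
        (hreg.continuousOn_deriv_of_isOpen isOpen_Ioo le_rfl).mono hsub
      have hint : IntervalIntegrable (deriv f) volume ε x := hcont.intervalIntegrable
      have hftc : ∫ t in ε..x, deriv f t = f x - f ε :=
        intervalIntegral.integral_eq_sub_of_hasDerivAt hderivAt hint
      calc ENNReal.ofReal (f x - f ε) ≤ (‖f x - f ε‖₊ : ENNReal) := by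
            rw [← enorm_eq_nnnorm, Real.enorm_eq_ofReal_abs]
            exact ENNReal.ofReal_le_ofReal (le_abs_self _)
        _ = (‖∫ t in ε..x, deriv f t‖₊ : ENNReal) := by rw [hftc]
        _ ≤ ∫⁻ t in Ioc ε x, g t := by
            rw [intervalIntegral.integral_of_le hε.2.le]
            exact enorm_integral_le_lintegral_enorm _
        _ ≤ ∫⁻ t in Ioc 0 x, g t := lintegral_mono_set (Ioc_subset_Ioc_left hε.1.le)
        _ = ∫⁻ t in Ioo 0 x, g t := (setLIntegral_congr Ioo_ae_eq_Ioc).symm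
    have htend : Filter.Tendsto (fun ε => ENNReal.ofReal (f x - f ε))
        (nhdsWithin 0 (Ioi (0:ℝ))) (nhds (ENNReal.ofReal (f x))) := by
      have h1 : Filter.Tendsto (fun ε => f x - f ε) (nhdsWithin 0 (Ioi (0:ℝ)))
          (nhds (f x - 0)) := Filter.Tendsto.const_sub _ hlim
      rw [sub_zero] at h1
      exact (ENNReal.continuous_ofReal.continuousAt).tendsto.comp h1
    apply le_of_tendsto htend
    filter_upwards [Ioo_mem_nhdsGT_of_mem (⟨le_refl (0:ℝ), hx.1⟩ : (0:ℝ) ∈ Ico (0:ℝ) x)]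
      with ε hε
    exact hbound ε hε
  -- Step B : pointwise bound
  have hB : ∀ x ∈ Ioo (0:ℝ) 1, (‖f x / x‖₊ : ENNReal) ^ p
      ≤ (∫⁻ t in Ioo (0:ℝ) x, g t) ^ p * ENNReal.ofReal (x ^ (-p)) := by
    intro x hx
    have hfx := hfpos x hx
    have h1 : (‖f x / x‖₊ : ENNReal) = ENNReal.ofReal (f x) * ENNReal.ofReal x⁻¹ := by
      rw [← enorm_eq_nnnorm, Real.enorm_eq_ofReal (div_pos hfx hx.1).le, div_eq_mul_inv,
        ENNReal.ofReal_mul hfx.le]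
    rw [h1, ENNReal.mul_rpow_of_nonneg _ _ hp0.le]
    apply mul_le_mul'
    · exact ENNReal.rpow_le_rpow (hA x hx) hp0.le
    · apply le_of_eq
      rw [ENNReal.ofReal_rpow_of_pos (inv_pos.mpr hx.1)]
      congr 1
      rw [← Real.rpow_neg_one x, ← Real.rpow_mul hx.1.le, neg_one_mul]
  -- Step C : integrate and apply the key lemma
  have hC : ∫⁻ x in Ioo (0:ℝ) 1, (‖f x / x‖₊ : ENNReal) ^ p
      ≤ ENNReal.ofReal q ^ p * ∫⁻ t in Ioo (0:ℝ) 1, g t ^ p := by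
    calc ∫⁻ x in Ioo (0:ℝ) 1, (‖f x / x‖₊ : ENNReal) ^ p
        ≤ ∫⁻ x in Ioo (0:ℝ) 1, (∫⁻ t in Ioo (0:ℝ) x, g t) ^ p *
            ENNReal.ofReal (x ^ (-p)) := by
          apply lintegral_mono_ae
          filter_upwards [self_mem_ae_restrict
            (measurableSet_Ioo : MeasurableSet (Ioo (0:ℝ) 1))] with x hx
          exact hB x hx
      _ ≤ _ := hardyKey hp g hgmeas
  -- Step D : conclude via eLpNorm
  have hpne : (ENNReal.ofReal p) ≠ 0 := (ENNReal.ofReal_pos.mpr hp0).ne'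
  rw [eLpNorm_eq_lintegral_rpow_enorm_toReal hpne ENNReal.ofReal_ne_top,
    eLpNorm_eq_lintegral_rpow_enorm_toReal hpne ENNReal.ofReal_ne_top,
    ENNReal.toReal_ofReal hp0.le]
  calc (∫⁻ x in Ioo (0:ℝ) 1, (‖f x / x‖₊ : ENNReal) ^ p) ^ (1/p)
      ≤ (ENNReal.ofReal q ^ p * ∫⁻ t in Ioo (0:ℝ) 1, g t ^ p) ^ (1/p) :=
        ENNReal.rpow_le_rpow hC (by positivity)
    _ = ENNReal.ofReal q * (∫⁻ t in Ioo (0:ℝ) 1, g t ^ p) ^ (1/p) := by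
        rw [ENNReal.mul_rpow_of_nonneg _ _ (by positivity : (0:ℝ) ≤ 1/p),
          ← ENNReal.rpow_mul, mul_one_div, div_self hp0.ne', ENNReal.rpow_one]
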